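/- Let n ≥ 1, b ∈ (-1, -(n-2)/(n+2)], θ, γ, η ∈ ℝ. Define f on 𝔻 by z f'(z) = z/((1+ze^{i(η+γ)})(1+ze^{-i(η-γ)})), f(0)=0, and r by r(0)=0, r'(z) = f'(z)/(1 - e^{i(θ-2γ)} z^n). Assume Re(1 + z f''(z)/f'(z)) > 0 on 𝔻. Then ŵ(z) = e^{iθ} z^n [ ((n+(n+2)b)/(1+b) + zr''(z)/r'(z)) / (2/(1+b) + zr''(z)/r'(z)) ] satisfies |ŵ(z)| < 1 for all z ∈ 𝔻. -/

import Mathlib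

open Metric Complex

lemma aux_re_pos {u : ℂ} (hu : ‖u‖ < 1) : 0 < ((1 + u) / (1 - u)).re := by
  have h1 : Complex.normSq u < 1 := by
    have := Complex.sq_norm u
    nlinarith [norm_nonneg u]
  have hne : (1 - u) ≠ 0 := by
    intro h
    have : u = 1 := by linear_combination -h
    simp [this] at hu
  have hpos : 0 < Complex.normSq (1 - u) := by
    simpa [Complex.normSq_pos] using hne
  rw [Complex.div_re]
  have hnum : (1 + u).re * (1 - u).re + (1 + u).im * (1 - u).im = 1 - Complex.normSq u := by
    simp [Complex.normSq_apply]
    ring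
  rw [← add_div, hnum]
  exact div_pos (by linarith) hpos

open Metric Complex in
theorem stmt_17 (n : ℕ) (hn : 1 ≤ n) (b : ℝ)
    (hb₁ : -1 < b) (hb₂ : b ≤ -(((n : ℝ) - 2) / ((n : ℝ) + 2))) (θ γ η : ℝ)
    (f f' f'' r' r'' : ℂ → ℂ)
    (hf0 : f 0 = 0)
    (hf' : ∀ z ∈ ball (0 : ℂ) 1, HasDerivAt f (f' z) z)
    (hf'eq : ∀ z ∈ ball (0 : ℂ) 1, z * f' z =
      z / ((1 + z * Complex.exp ((η + γ) * Complex.I)) *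
        (1 + z * Complex.exp (-(η - γ) * Complex.I))))
    (hf'' : ∀ z ∈ ball (0 : ℂ) 1, HasDerivAt f' (f'' z) z)
    (hf'ne : ∀ z ∈ ball (0 : ℂ) 1, f' z ≠ 0)
    (hr' : ∀ z ∈ ball (0 : ℂ) 1,
      r' z = f' z / (1 - Complex.exp ((θ - 2 * γ) * Complex.I) * z ^ n))
    (hr'' : ∀ z ∈ ball (0 : ℂ) 1, HasDerivAt r' (r'' z) z)
    (hre : ∀ z ∈ ball (0 : ℂ) 1, (1 + z * f'' z / f' z).re > 0) :
    ∀ z ∈ ball (0 : ℂ) 1,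
      ‖Complex.exp (θ * Complex.I) * z ^ n *
        (((((n : ℂ) + ((n : ℂ) + 2) * (b : ℂ)) / (1 + (b : ℂ))) + z * r'' z / r' z) /
          ((2 / (1 + (b : ℂ))) + z * r'' z / r' z))‖ < 1 := by
  obtain ⟨m, rfl⟩ : ∃ m, n = m + 1 := ⟨n - 1, (Nat.succ_pred_eq_of_pos hn).symm⟩
  set n : ℕ := m + 1 with hnm
  intro z hz
  have hzabs : ‖z‖ < 1 := by simpa using mem_ball_zero_iff.mp hz
  set c : ℂ := Complex.exp (((θ : ℂ) - 2 * γ) * Complex.I) with hc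
  have hcabs : ‖c‖ = 1 := by
    rw [hc, Complex.norm_exp]
    simp
  have hznabs : ‖z ^ n‖ < 1 := by
    rw [norm_pow]
    exact pow_lt_one₀ (norm_nonneg z) hzabs (by omega)
  set u : ℂ := c * z ^ n with hu
  have huabs : ‖u‖ < 1 := by
    rw [hu, norm_mul, hcabs, one_mul]; exact hznabs
  have hune : (1 : ℂ) - u ≠ 0 := by
    intro h
    have : u = 1 := by linear_combination -h
    simp [this] at huabs
  -- derivative of r'
  have hden : HasDerivAt (fun w : ℂ => 1 - c * w ^ n) (-(c * (n * z ^ m))) z := by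
    simpa [hnm] using ((hasDerivAt_pow n z).const_mul c).const_sub 1
  have hg : HasDerivAt (fun w : ℂ => f' w / (1 - c * w ^ n))
      ((f'' z * (1 - c * z ^ n) - f' z * (-(c * (n * z ^ m)))) / (1 - c * z ^ n) ^ 2) z :=
    (hf'' z hz).div hden (by simpa [hu] using hune)
  have hr'g : HasDerivAt r'
      ((f'' z * (1 - c * z ^ n) - f' z * (-(c * (n * z ^ m)))) / (1 - c * z ^ n) ^ 2) z := by
    apply hg.congr_of_eventuallyEq
    filter_upwards [isOpen_ball.mem_nhds hz] with w hw
    exact hr' w hw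
  have hr''eq : r'' z =
      (f'' z * (1 - c * z ^ n) - f' z * (-(c * (n * z ^ m)))) / (1 - c * z ^ n) ^ 2 :=
    (hr'' z hz).unique hr'g
  have hf'z := hf'ne z hz
  have hr'z : r' z = f' z / (1 - u) := hr' z hz
  -- key identity for Q
  set Q : ℂ := z * r'' z / r' z with hQdef
  have hQ : Q = z * f'' z / f' z + (n : ℂ) * u / (1 - u) := by
    have hune2 : (1 : ℂ) - c * z ^ (m + 1) ≠ 0 := hune
    rw [hQdef, hr''eq, hr'z, hu, hnm]
    field_simp
    ring
  -- real part inequality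
  have hid : (n : ℂ) + 2 + 2 * Q = 2 * (1 + z * f'' z / f' z) + (n : ℂ) * ((1 + u) / (1 - u)) := by
    rw [hQ]
    field_simp
    ring
  have hre1 := hre z hz
  have hre2 := aux_re_pos huabs
  have hL : ((n : ℂ) + 2 + 2 * Q).re = (n : ℝ) + 2 + 2 * Q.re := by simp
  have hR : (2 * (1 + z * f'' z / f' z) + (n : ℂ) * ((1 + u) / (1 - u))).re
      = 2 * (1 + z * f'' z / f' z).re + (n : ℝ) * ((1 + u) / (1 - u)).re := by
    simp [Complex.add_re, Complex.mul_re]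
  have hkey : (n : ℝ) + 2 + 2 * Q.re > 0 := by
    have h := congrArg Complex.re hid
    rw [hL, hR] at h
    have hn0 : (0 : ℝ) ≤ (n : ℝ) := Nat.cast_nonneg n
    nlinarith [mul_nonneg hn0 hre2.le]
  -- constants
  have hb : (0 : ℝ) < 1 + b := by linarith
  have hn2 : (0 : ℝ) < (n : ℝ) + 2 := by positivity
  set kR : ℝ := ((n : ℝ) + ((n : ℝ) + 2) * b) / (1 + b) with hkR
  set k'R : ℝ := 2 / (1 + b) with hk'R
  have hsum : kR + k'R = (n : ℝ) + 2 := by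
    rw [hkR, hk'R]; field_simp; ring
  have hb2' : b * ((n : ℝ) + 2) ≤ -((n : ℝ) - 2) := by
    have h : b ≤ (-((n : ℝ) - 2)) / ((n : ℝ) + 2) := by rw [neg_div]; exact hb₂
    rwa [le_div_iff₀ hn2] at h
  have hdiff : kR ≤ k'R := by
    rw [hkR, hk'R]
    gcongr
    nlinarith
  -- cast constants
  have hKc : ((n : ℂ) + ((n : ℂ) + 2) * (b : ℂ)) / (1 + (b : ℂ)) = (kR : ℂ) := by
    rw [hkR]; push_cast; ring
  have hK'c : (2 : ℂ) / (1 + (b : ℂ)) = (k'R : ℂ) := by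
    rw [hk'R]; push_cast; ring
  rw [hKc, hK'c]
  -- denominator has positive real part
  have hBre : 0 < ((k'R : ℂ) + Q).re := by
    simp only [Complex.add_re, Complex.ofReal_re]
    linarith
  have hBne : ((k'R : ℂ) + Q) ≠ 0 := fun h => by simp [h] at hBre
  have hBpos : 0 < ‖(k'R : ℂ) + Q‖ := norm_pos_iff.mpr hBne
  have habs_le : ‖(kR : ℂ) + Q‖ ≤ ‖(k'R : ℂ) + Q‖ := by
    rw [← Real.sqrt_sq (norm_nonneg _), ← Real.sqrt_sq (norm_nonneg ((k'R : ℂ) + Q))]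
    apply Real.sqrt_le_sqrt
    rw [Complex.sq_norm, Complex.sq_norm, Complex.normSq_apply, Complex.normSq_apply]
    simp only [Complex.add_re, Complex.add_im, Complex.ofReal_re, Complex.ofReal_im, zero_add]
    nlinarith [mul_nonneg (sub_nonneg.mpr hdiff)
      (by linarith : (0 : ℝ) ≤ kR + k'R + 2 * Q.re)]
  rw [norm_mul, norm_mul, Complex.norm_exp, norm_div]
  have he1 : Real.exp (((θ : ℂ) * Complex.I).re) = 1 := by simp
  rw [he1, one_mul]
  have hratio : ‖(kR : ℂ) + Q‖ / ‖(k'R : ℂ) + Q‖ ≤ 1 :=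
    div_le_one_of_le₀ habs_le (norm_nonneg _)
  calc ‖z ^ n‖ * (‖(kR : ℂ) + Q‖ / ‖(k'R : ℂ) + Q‖)
      ≤ ‖z ^ n‖ * 1 :=
        mul_le_mul_of_nonneg_left hratio (norm_nonneg _)
    _ < 1 := by rw [mul_one]; exact hznabs
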